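/- Let x, x* ∈ ℝ^n with Σ_{i=1}^n x_i = Σ_{i=1}^n x_i*, and suppose the derivatives f_i'(x_i*) all equal a common value (i.e., f_i'(x_i*) = f_j'(x_j*) for all i, j). Then F(x) − F(x*) ≤ ‖x − x*‖₂ · ‖∇F(x) − ∇F(x*)‖₂, where ∇F(x) denotes the vector (f_1'(x_1), …, f_n'(x_n)). -/
import Mathlib

lemma tangent_le (f : ℝ → ℝ) (d : ℝ → ℝ) (hconv : ConvexOn ℝ Set.univ f)
    (hderiv : ∀ t, HasDerivAt f (d t) t) (a b : ℝ) :
    f b - f a ≤ d b * (b - a) := by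
  rcases lt_trichotomy a b with h | h | h
  · have := hconv.slope_le_of_hasDerivAt (Set.mem_univ a) (Set.mem_univ b) h (hderiv b)
    rw [slope_def_field, div_le_iff₀ (by linarith)] at this
    linarith
  · simp [h]
  · have := hconv.le_slope_of_hasDerivAt (Set.mem_univ b) (Set.mem_univ a) h (hderiv b)
    rw [slope_def_field, le_div_iff₀ (by linarith)] at this
    nlinarith

/-- If Σ xᵢ = Σ xᵢ* and the derivatives f_i'(x_i*) all agree, then
F(x) − F(x*) ≤ ‖x − x*‖₂ · ‖∇F(x) − ∇F(x*)‖₂. -/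
theorem stmt_11 (n : ℕ) (hn : 1 ≤ n) (f f' : Fin n → ℝ → ℝ)
    (hconv : ∀ i, ConvexOn ℝ Set.univ (f i))
    (hderiv : ∀ i t, HasDerivAt (f i) (f' i t) t)
    (x xs : Fin n → ℝ)
    (hsum : ∑ i, x i = ∑ i, xs i)
    (heq : ∀ i j : Fin n, f' i (xs i) = f' j (xs j)) :
    ∑ i, f i (x i) - ∑ i, f i (xs i) ≤
      Real.sqrt (∑ i, (x i - xs i) ^ 2) *
        Real.sqrt (∑ i, (f' i (x i) - f' i (xs i)) ^ 2) := by
  set i0 : Fin n := ⟨0, hn⟩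
  set c : ℝ := f' i0 (xs i0) with hc
  have h1 : ∑ i, f i (x i) - ∑ i, f i (xs i) ≤
      ∑ i, (f' i (x i) - f' i (xs i)) * (x i - xs i) := by
    rw [← Finset.sum_sub_distrib]
    calc ∑ i, (f i (x i) - f i (xs i))
        ≤ ∑ i, f' i (x i) * (x i - xs i) :=
          Finset.sum_le_sum fun i _ => tangent_le (f i) (f' i) (hconv i) (hderiv i) (xs i) (x i)
      _ = ∑ i, ((f' i (x i) - f' i (xs i)) * (x i - xs i) + c * (x i - xs i)) := by
          refine Finset.sum_congr rfl fun i _ => ?_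
          rw [heq i i0]; ring
      _ = ∑ i, (f' i (x i) - f' i (xs i)) * (x i - xs i) + c * (∑ i, x i - ∑ i, xs i) := by
          rw [Finset.sum_add_distrib, ← Finset.mul_sum, Finset.sum_sub_distrib]
      _ = ∑ i, (f' i (x i) - f' i (xs i)) * (x i - xs i) := by rw [hsum]; ring
  refine h1.trans ?_
  have h2 : (∑ i, (f' i (x i) - f' i (xs i)) * (x i - xs i)) ^ 2 ≤
      (∑ i, (x i - xs i) ^ 2) * ∑ i, (f' i (x i) - f' i (xs i)) ^ 2 := by
    have := Finset.sum_mul_sq_le_sq_mul_sq Finset.univ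
      (fun i => x i - xs i) (fun i => f' i (x i) - f' i (xs i))
    calc (∑ i, (f' i (x i) - f' i (xs i)) * (x i - xs i)) ^ 2
        = (∑ i, (x i - xs i) * (f' i (x i) - f' i (xs i))) ^ 2 := by
          congr 1; exact Finset.sum_congr rfl fun i _ => by ring
      _ ≤ _ := this
  calc ∑ i, (f' i (x i) - f' i (xs i)) * (x i - xs i)
      ≤ |∑ i, (f' i (x i) - f' i (xs i)) * (x i - xs i)| := le_abs_self _
    _ = Real.sqrt ((∑ i, (f' i (x i) - f' i (xs i)) * (x i - xs i)) ^ 2) := by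
        rw [Real.sqrt_sq_eq_abs]
    _ ≤ Real.sqrt ((∑ i, (x i - xs i) ^ 2) * ∑ i, (f' i (x i) - f' i (xs i)) ^ 2) :=
        Real.sqrt_le_sqrt h2
    _ = _ := Real.sqrt_mul (Finset.sum_nonneg fun i _ => sq_nonneg _) _
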